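/- Let p be a symmetric synchronous nonsignaling correlation from a finite set X to a finite set Y which is an epimorphism with respect to synchronous classical correlations (i.e., for every finite set Z and every pair of synchronous classical correlations q_1, q_2 from Y to Z, q_1 ∘ p = q_2 ∘ p implies q_1 = q_2). If v : Y × Y → ℝ satisfies v(y_A, y_B) = −v(y_B, y_A) for all y_A, y_B and ∑_{y_A, y_B ∈ Y} v(y_A, y_B) p(y_A, y_B | x_A, x_B) = 0 for all x_A, x_B ∈ X, then v = 0. -/

import Mathlib

open Finset Matrix Kronecker
open scoped ComplexOrder

/-- A correlation from a finite set `X` to a finite set `Y`. -/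
def IsCorrelation {X Y : Type*} [Fintype X] [Fintype Y]
    (p : Y → Y → X → X → ℝ) : Prop :=
  (∀ yA yB xA xB, 0 ≤ p yA yB xA xB) ∧
  ∀ xA xB, (∑ yA : Y, ∑ yB : Y, p yA yB xA xB) = 1

/-- A correlation is synchronous if `p yA yB x x = 0` whenever `yA ≠ yB`. -/
def IsSynchronous {X Y : Type*} (p : Y → Y → X → X → ℝ) : Prop :=
  ∀ (x : X) (yA yB : Y), yA ≠ yB → p yA yB x x = 0

/-- Composition of correlations via Kolmogorov's law. -/
def Comp {X Y Z : Type*} [Fintype Y]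
    (q : Z → Z → Y → Y → ℝ) (p : Y → Y → X → X → ℝ) :
    Z → Z → X → X → ℝ :=
  fun zA zB xA xB => ∑ yA : Y, ∑ yB : Y, q zA zB yA yB * p yA yB xA xB

/-- The identity correlation on `X`. -/
def IdCorr (X : Type*) [DecidableEq X] : X → X → X → X → ℝ :=
  fun xA' xB' xA xB =>
    (if xA' = xA then (1 : ℝ) else 0) * (if xB' = xB then (1 : ℝ) else 0)

/-- The nonsignaling condition. -/
def IsNonsignaling {X Y : Type*} [Fintype Y] (p : Y → Y → X → X → ℝ) : Prop :=
  (∀ yA xA xB xB', (∑ yB : Y, p yA yB xA xB) = ∑ yB : Y, p yA yB xA xB') ∧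
  (∀ yB xA xA' xB, (∑ yA : Y, p yA yB xA xB) = ∑ yA : Y, p yA yB xA' xB)

/-- A classical (hidden variables) correlation. -/
def IsClassical {X Y : Type*} [Fintype X] [Fintype Y] (p : Y → Y → X → X → ℝ) : Prop :=
  ∃ (n : ℕ) (μ : Fin n → ℝ) (PrA PrB : Y → X → Fin n → ℝ),
    (∀ ω, 0 ≤ μ ω) ∧ ((∑ ω, μ ω) = 1) ∧
    (∀ y x ω, 0 ≤ PrA y x ω) ∧ (∀ x ω, (∑ y : Y, PrA y x ω) = 1) ∧
    (∀ y x ω, 0 ≤ PrB y x ω) ∧ (∀ x ω, (∑ y : Y, PrB y x ω) = 1) ∧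
    ∀ yA yB xA xB, p yA yB xA xB = ∑ ω, μ ω * PrA yA xA ω * PrB yB xB ω

/-- A quantum correlation. -/
def IsQuantum {X Y : Type*} [Fintype X] [Fintype Y] (p : Y → Y → X → X → ℝ) : Prop :=
  ∃ (dA dB : ℕ), 0 < dA ∧ 0 < dB ∧
    ∃ (ρ : Matrix (Fin dA × Fin dB) (Fin dA × Fin dB) ℂ)
      (E : X → Y → Matrix (Fin dA) (Fin dA) ℂ)
      (F : X → Y → Matrix (Fin dB) (Fin dB) ℂ),
      ρ.PosSemidef ∧ ρ.trace = 1 ∧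
      (∀ x y, (E x y).PosSemidef) ∧ (∀ x, (∑ y : Y, E x y) = 1) ∧
      (∀ x y, (F x y).PosSemidef) ∧ (∀ x, (∑ y : Y, F x y) = 1) ∧
      ∀ yA yB xA xB, (ρ * (E xA yA ⊗ₖ F xB yB)).trace = (p yA yB xA xB : ℂ)

/-- A symmetric correlation. -/
def IsSymmetric {X Y : Type*} (p : Y → Y → X → X → ℝ) : Prop :=
  ∀ yA yB xA xB, p yA yB xA xB = p yB yA xB xA

/-- For a symmetric synchronous nonsignaling correlation which is epic with respect to
synchronous classical correlations, any antisymmetric left nullspace vector vanishes. -/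


noncomputable def aind {α : Type*} [DecidableEq α] (x z : α) : ℝ := if x = z then 1 else 0

lemma aind_nonneg {α : Type*} [DecidableEq α] (x z : α) : 0 ≤ aind x z := by
  unfold aind; split <;> norm_num

lemma aind_self {α : Type*} [DecidableEq α] (x : α) : aind x x = 1 := by simp [aind]

lemma aind_ne {α : Type*} [DecidableEq α] {x z : α} (h : x ≠ z) : aind x z = 0 := by
  simp [aind, h]

lemma sum_aind {α : Type*} [Fintype α] [DecidableEq α] (x : α) : (∑ z, aind x z) = 1 := by
  simp [aind]

lemma aind_mul_aind_ne {α : Type*} [DecidableEq α] (x : α) {z z' : α} (h : z ≠ z') :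
    aind x z * aind x z' = 0 := by
  unfold aind; split_ifs with h1 h2 <;> simp_all

noncomputable def auxC (s t : Fin 3) : ℝ := if t = s + 1 then 1 else if s = t + 1 then -1 else 0

lemma auxC_abs (s t : Fin 3) : |auxC s t| ≤ 1 := by
  unfold auxC; split_ifs <;> norm_num

lemma auxC_row (s : Fin 3) : (∑ t, auxC s t) = 0 := by
  fin_cases s <;> simp [Fin.sum_univ_three, auxC]

lemma auxC_col (t : Fin 3) : (∑ s, auxC s t) = 0 := by
  fin_cases t <;> simp [Fin.sum_univ_three, auxC]

lemma auxC_sum : (∑ s : Fin 3, ∑ t : Fin 3, auxC s t) = 0 := by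
  simp [auxC_row]

lemma auxC_01 : auxC 0 1 = 1 := by simp [auxC]

lemma aux_pick2 (f : Fin 3 → Fin 3 → ℝ) (zA zB : Fin 3) :
    (∑ s : Fin 3, ∑ t : Fin 3, f s t * (aind s zA * aind t zB)) = f zA zB := by
  fin_cases zA <;> fin_cases zB <;>
    simp [Fin.sum_univ_three, aind]

lemma aux_cswap (zA zB : Fin 3) :
    (∑ s : Fin 3, ∑ t : Fin 3, auxC s t * (aind t zA * aind s zB)) = -auxC zA zB := by
  fin_cases zA <;> fin_cases zB <;>
    simp [Fin.sum_univ_three, aind, auxC]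

lemma aux_Ht (g : Fin 3 → ℝ) : (∑ s : Fin 3, ∑ t : Fin 3, auxC s t * g t) = 0 := by
  rw [Finset.sum_comm]
  simp only [← Finset.sum_mul]
  simp [auxC_col]

lemma aux_Hs (g : Fin 3 → ℝ) : (∑ s : Fin 3, ∑ t : Fin 3, auxC s t * g s) = 0 := by
  have : ∀ s : Fin 3, (∑ t : Fin 3, auxC s t * g s) = 0 := by
    intro s
    rw [← Finset.sum_mul, auxC_row, zero_mul]
  simp [this]

lemma aux_pickY {Y : Type*} [Fintype Y] [DecidableEq Y] (w : Y → Y → ℝ) (yA yB : Y) :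
    (∑ a : Y, ∑ b : Y, w a b * (aind yA a * aind yB b)) = w yA yB := by
  simp [aind, mul_ite, ite_mul, mul_zero, mul_one, zero_mul, Finset.sum_ite_eq]

noncomputable def auxF {Y : Type*} [DecidableEq Y] (a b : Y) (s t : Fin 3) (y : Y) : Fin 3 :=
  if y = b then t else if y = a then s else 0

lemma auxF_at_b {Y : Type*} [DecidableEq Y] (a b : Y) (s t : Fin 3) : auxF a b s t b = t := by
  simp [auxF]

lemma auxF_at_a {Y : Type*} [DecidableEq Y] {a b : Y} (h : a ≠ b) (s t : Fin 3) :
    auxF a b s t a = s := by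
  simp [auxF, h]

lemma auxF_at_other {Y : Type*} [DecidableEq Y] {a b y : Y} (ha : y ≠ a) (hb : y ≠ b)
    (s t : Fin 3) : auxF a b s t y = 0 := by
  simp [auxF, ha, hb]

lemma Linner {Y : Type*} [DecidableEq Y] {a b : Y} (hab : a ≠ b) (yA yB : Y) (zA zB : Fin 3) :
    (∑ s : Fin 3, ∑ t : Fin 3,
        auxC s t * (aind (auxF a b s t yA) zA * aind (auxF a b s t yB) zB))
      = auxC zA zB * (aind yA a * aind yB b - aind yB a * aind yA b) := by
  rcases eq_or_ne yA b with h1 | h1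
  · rcases eq_or_ne yB b with h2 | h2
    · -- both at b
      simp only [h1, h2, auxF_at_b]
      rw [aux_Ht (fun t => aind t zA * aind t zB)]
      simp
    · rcases eq_or_ne yB a with h3 | h3
      · -- yA = b, yB = a
        simp only [h1, h3, auxF_at_b, auxF_at_a hab]
        rw [aux_cswap]
        simp [aind, hab, hab.symm]
      · -- yA = b, yB other
        simp only [h1, auxF_at_b, auxF_at_other h3 h2]
        rw [aux_Ht (fun t => aind t zA * aind (0 : Fin 3) zB)]
        simp [aind, hab, hab.symm, h2, h3]
  · rcases eq_or_ne yA a with h4 | h4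
    · rcases eq_or_ne yB b with h2 | h2
      · -- yA = a, yB = b
        simp only [h4, h2, auxF_at_b, auxF_at_a hab]
        rw [aux_pick2 auxC]
        simp [aind, hab, hab.symm]
      · rcases eq_or_ne yB a with h3 | h3
        · -- both at a
          simp only [h4, h3, auxF_at_a hab]
          rw [aux_Hs (fun s => aind s zA * aind s zB)]
          simp
        · -- yA = a, yB other
          simp only [h4, auxF_at_a hab, auxF_at_other h3 h2]
          rw [aux_Hs (fun s => aind s zA * aind (0 : Fin 3) zB)]
          simp [aind, hab, hab.symm, h2, h3]
    · rcases eq_or_ne yB b with h2 | h2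
      · -- yA other, yB = b
        simp only [h2, auxF_at_b, auxF_at_other h4 h1]
        rw [aux_Ht (fun t => aind (0 : Fin 3) zA * aind t zB)]
        simp [aind, hab, hab.symm, h4, h1]
      · rcases eq_or_ne yB a with h3 | h3
        · -- yA other, yB = a
          simp only [h3, auxF_at_a hab, auxF_at_other h4 h1]
          rw [aux_Hs (fun s => aind (0 : Fin 3) zA * aind s zB)]
          simp [aind, hab, hab.symm, h4, h1]
        · -- both other
          simp only [auxF_at_other h4 h1, auxF_at_other h3 h2]
          rw [aux_Hs (fun _ => aind (0 : Fin 3) zA * aind (0 : Fin 3) zB)]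
          simp [aind, h4, h1, h3, h2]

lemma Lmain {Y : Type*} [Fintype Y] [DecidableEq Y] (v : Y → Y → ℝ)
    (hvskew : ∀ yA yB, v yA yB = -v yB yA) (zA zB : Fin 3) (yA yB : Y) :
    (∑ a : Y, ∑ b : Y, ∑ s : Fin 3, ∑ t : Fin 3,
        v a b * auxC s t * (aind (auxF a b s t yA) zA * aind (auxF a b s t yB) zB))
      = 2 * (auxC zA zB * v yA yB) := by
  have hdiag : ∀ y, v y y = 0 := fun y => by have := hvskew y y; linarith
  have step : ∀ a b : Y,
      (∑ s : Fin 3, ∑ t : Fin 3,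
          v a b * auxC s t * (aind (auxF a b s t yA) zA * aind (auxF a b s t yB) zB))
        = v a b * (auxC zA zB * (aind yA a * aind yB b - aind yB a * aind yA b)) := by
    intro a b
    rcases eq_or_ne a b with rfl | hab
    · simp [hdiag]
    · simp only [mul_assoc, ← Finset.mul_sum]
      rw [Linner hab]
  simp only [step]
  have expand : ∀ a b : Y,
      v a b * (auxC zA zB * (aind yA a * aind yB b - aind yB a * aind yA b))
        = (auxC zA zB * v a b) * (aind yA a * aind yB b)
          - (auxC zA zB * v a b) * (aind yB a * aind yA b) := by
    intro a b; ring
  simp only [expand, Finset.sum_sub_distrib]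
  rw [aux_pickY (fun a b => auxC zA zB * v a b) yA yB,
    aux_pickY (fun a b => auxC zA zB * v a b) yB yA]
  rw [hvskew yB yA]
  ring

abbrev AuxOm (Y : Type*) := (Y × Y × Fin 3 × Fin 3) ⊕ Unit

noncomputable def auxG {Y : Type*} [DecidableEq Y] : AuxOm Y → Y → Fin 3
  | .inl (a, b, s, t) => auxF a b s t
  | .inr _ => fun _ => 0

noncomputable def auxQ {Y : Type*} [Fintype Y] [DecidableEq Y] (μ : AuxOm Y → ℝ) :
    Fin 3 → Fin 3 → Y → Y → ℝ :=
  fun zA zB yA yB => ∑ ω, μ ω * (aind (auxG ω yA) zA * aind (auxG ω yB) zB)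

lemma auxQ_sum {Y : Type*} [Fintype Y] [DecidableEq Y] (μ : AuxOm Y → ℝ) (yA yB : Y) :
    (∑ zA : Fin 3, ∑ zB : Fin 3, auxQ μ zA zB yA yB) = ∑ ω, μ ω := by
  unfold auxQ
  have swap : (∑ zA : Fin 3, ∑ zB : Fin 3, ∑ ω : AuxOm Y,
      μ ω * (aind (auxG ω yA) zA * aind (auxG ω yB) zB))
      = ∑ ω : AuxOm Y, ∑ zA : Fin 3, ∑ zB : Fin 3,
        μ ω * (aind (auxG ω yA) zA * aind (auxG ω yB) zB) := by
    calc (∑ zA : Fin 3, ∑ zB : Fin 3, ∑ ω : AuxOm Y,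
        μ ω * (aind (auxG ω yA) zA * aind (auxG ω yB) zB))
        = ∑ zA : Fin 3, ∑ ω : AuxOm Y, ∑ zB : Fin 3,
          μ ω * (aind (auxG ω yA) zA * aind (auxG ω yB) zB) :=
        Finset.sum_congr rfl fun zA _ => Finset.sum_comm
      _ = _ := Finset.sum_comm
  rw [swap]
  refine Finset.sum_congr rfl fun ω _ => ?_
  simp only [← Finset.mul_sum]
  rw [sum_aind]
  simp [← Finset.mul_sum, sum_aind]

lemma auxQ_corr {Y : Type*} [Fintype Y] [DecidableEq Y]
    (μ : AuxOm Y → ℝ) (hμ : ∀ ω, 0 ≤ μ ω) (hs : (∑ ω, μ ω) = 1) :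
    IsCorrelation (auxQ μ) :=
  ⟨fun zA zB yA yB => Finset.sum_nonneg fun ω _ =>
      mul_nonneg (hμ ω) (mul_nonneg (aind_nonneg _ _) (aind_nonneg _ _)),
   fun yA yB => by rw [auxQ_sum]; exact hs⟩

lemma auxQ_sync {Y : Type*} [Fintype Y] [DecidableEq Y] (μ : AuxOm Y → ℝ)
    (y : Y) {zA zB : Fin 3} (h : zA ≠ zB) : auxQ μ zA zB y y = 0 :=
  Finset.sum_eq_zero fun ω _ => by rw [aind_mul_aind_ne _ h, mul_zero]


lemma auxQ_classical {Y : Type*} [Fintype Y] [DecidableEq Y] (μ : AuxOm Y → ℝ)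
    (hμ : ∀ ω, 0 ≤ μ ω) (hs : (∑ ω, μ ω) = 1) : IsClassical (auxQ μ) := by
  classical
  let e := Fintype.equivFin (AuxOm Y)
  refine ⟨Fintype.card (AuxOm Y), fun i => μ (e.symm i),
    fun z y i => aind (auxG (e.symm i) y) z, fun z y i => aind (auxG (e.symm i) y) z,
    fun i => hμ _, ?_, fun z y i => aind_nonneg _ _, fun y i => sum_aind _,
    fun z y i => aind_nonneg _ _, fun y i => sum_aind _, ?_⟩
  · rw [Equiv.sum_comp e.symm μ]; exact hs
  · intro zA zB yA yB
    rw [show (∑ i, μ (e.symm i) * aind (auxG (e.symm i) yA) zA * aind (auxG (e.symm i) yB) zB)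
        = ∑ ω, μ ω * aind (auxG ω yA) zA * aind (auxG ω yB) zB from
        Equiv.sum_comp e.symm (fun ω => μ ω * aind (auxG ω yA) zA * aind (auxG ω yB) zB)]
    unfold auxQ
    exact Finset.sum_congr rfl fun ω _ => by ring

lemma Ldelta {Y : Type*} [Fintype Y] [DecidableEq Y] (v : Y → Y → ℝ)
    (hvskew : ∀ yA yB, v yA yB = -v yB yA) (zA zB : Fin 3) (yA yB : Y) :
    (∑ ω : AuxOm Y,
        (Sum.elim (fun x : Y × Y × Fin 3 × Fin 3 => v x.1 x.2.1 * auxC x.2.2.1 x.2.2.2)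
          (fun _ => (0:ℝ)) ω) * (aind (auxG ω yA) zA * aind (auxG ω yB) zB))
      = 2 * (auxC zA zB * v yA yB) := by
  rw [Fintype.sum_sum_type]
  simp only [Sum.elim_inl, Sum.elim_inr, zero_mul, Finset.sum_const_zero, add_zero]
  simp only [Fintype.sum_prod_type]
  simp only [auxG]
  exact Lmain v hvskew zA zB yA yB

lemma auxQ_add {Y : Type*} [Fintype Y] [DecidableEq Y] (μ ν : AuxOm Y → ℝ) (c : ℝ)
    (zA zB : Fin 3) (yA yB : Y) :
    auxQ (fun ω => μ ω + c * ν ω) zA zB yA yB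
      = auxQ μ zA zB yA yB
        + c * ∑ ω, ν ω * (aind (auxG ω yA) zA * aind (auxG ω yB) zB) := by
  unfold auxQ
  rw [Finset.mul_sum, ← Finset.sum_add_distrib]
  exact Finset.sum_congr rfl fun ω _ => by ring

theorem antisymmetric_left_nullspace_vanishes {X Y : Type*} [Fintype X] [Fintype Y]
    (p : Y → Y → X → X → ℝ)
    (hp : IsCorrelation p) (hps : IsSynchronous p)
    (hpn : IsNonsignaling p) (hsym : IsSymmetric p)
    (hepi : ∀ (Z : Type) [Fintype Z] (q₁ q₂ : Z → Z → Y → Y → ℝ),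
      IsCorrelation q₁ → IsSynchronous q₁ → IsClassical q₁ →
      IsCorrelation q₂ → IsSynchronous q₂ → IsClassical q₂ →
      Comp q₁ p = Comp q₂ p → q₁ = q₂)
    (v : Y → Y → ℝ)
    (hvskew : ∀ yA yB, v yA yB = -v yB yA)
    (hv : ∀ xA xB, (∑ yA : Y, ∑ yB : Y, v yA yB * p yA yB xA xB) = 0) :
    v = 0 := by
  classical
  funext yA₀ yB₀
  simp only [Pi.zero_apply]
  have hN : (0:ℝ) < (Fintype.card (Y × Y × Fin 3 × Fin 3) : ℝ) := by
    have h : 0 < Fintype.card (Y × Y × Fin 3 × Fin 3) :=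
      Fintype.card_pos_iff.mpr ⟨(yA₀, yA₀, 0, 0)⟩
    exact_mod_cast h
  obtain ⟨δ, hδpos, hδsum⟩ :
      ∃ δ : ℝ, 0 < δ ∧ (∑ _x : Y × Y × Fin 3 × Fin 3, δ) = 1/2 := by
    refine ⟨1 / (2 * (Fintype.card (Y × Y × Fin 3 × Fin 3) : ℝ)),
      div_pos one_pos (by linarith), ?_⟩
    rw [Finset.sum_const, Finset.card_univ, nsmul_eq_mul, mul_one_div]
    rw [div_eq_div_iff (ne_of_gt (by linarith : (0:ℝ) < 2 * (Fintype.card (Y × Y × Fin 3 × Fin 3) : ℝ)))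
      (by norm_num : (2:ℝ) ≠ 0)]
    ring
  have hSv0 : 0 ≤ ∑ a : Y, ∑ b : Y, |v a b| :=
    Finset.sum_nonneg fun a _ => Finset.sum_nonneg fun b _ => abs_nonneg _
  obtain ⟨ε, hεpos, hεbd⟩ :
      ∃ ε : ℝ, 0 < ε ∧ ∀ (a b : Y) (s t : Fin 3), |ε * (v a b * auxC s t)| ≤ δ := by
    refine ⟨δ / ((∑ a : Y, ∑ b : Y, |v a b|) + 1),
      div_pos hδpos (by linarith), ?_⟩
    intro a b s t
    have hd : 0 < δ / ((∑ a : Y, ∑ b : Y, |v a b|) + 1) := div_pos hδpos (by linarith)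
    have hv1 : |v a b| ≤ ∑ a' : Y, ∑ b' : Y, |v a' b'| := by
      calc |v a b| ≤ ∑ b' : Y, |v a b'| :=
            Finset.single_le_sum (f := fun b' => |v a b'|)
              (fun _ _ => abs_nonneg _) (Finset.mem_univ b)
        _ ≤ ∑ a' : Y, ∑ b' : Y, |v a' b'| :=
            Finset.single_le_sum (f := fun a' => ∑ b' : Y, |v a' b'|)
              (fun _ _ => Finset.sum_nonneg fun _ _ => abs_nonneg _) (Finset.mem_univ a)
    have hw : |v a b * auxC s t| ≤ ∑ a' : Y, ∑ b' : Y, |v a' b'| := by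
      rw [abs_mul]
      calc |v a b| * |auxC s t| ≤ (∑ a' : Y, ∑ b' : Y, |v a' b'|) * 1 :=
            mul_le_mul hv1 (auxC_abs s t) (abs_nonneg _) hSv0
        _ = _ := mul_one _
    have hεS : δ / ((∑ a : Y, ∑ b : Y, |v a b|) + 1) * ((∑ a : Y, ∑ b : Y, |v a b|) + 1) = δ :=
      div_mul_cancel₀ δ (by linarith)
    have h2 : δ / ((∑ a : Y, ∑ b : Y, |v a b|) + 1) * |v a b * auxC s t|
        ≤ δ / ((∑ a : Y, ∑ b : Y, |v a b|) + 1) * (∑ a' : Y, ∑ b' : Y, |v a' b'|) :=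
      mul_le_mul_of_nonneg_left hw (le_of_lt hd)
    rw [abs_mul, abs_of_pos hd]
    nlinarith [hd, h2, hεS]
  set μ₁ : AuxOm Y → ℝ := Sum.elim (fun _ => δ) (fun _ => 1/2) with hμ₁def
  set μd : AuxOm Y → ℝ :=
    Sum.elim (fun x : Y × Y × Fin 3 × Fin 3 => v x.1 x.2.1 * auxC x.2.2.1 x.2.2.2)
      (fun _ => 0) with hμddef
  set μ₂ : AuxOm Y → ℝ := fun ω => μ₁ ω + ε * μd ω with hμ₂def
  have hμ₁nn : ∀ ω, 0 ≤ μ₁ ω := by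
    rintro (x | u)
    · simpa [hμ₁def] using hδpos.le
    · norm_num [hμ₁def]
  have hμ₁sum : (∑ ω, μ₁ ω) = 1 := by
    rw [hμ₁def, Fintype.sum_sum_type]
    simp only [Sum.elim_inl, Sum.elim_inr]
    rw [hδsum]
    simp
    norm_num
  have hμdsum : (∑ ω, μd ω) = 0 := by
    rw [hμddef, Fintype.sum_sum_type]
    simp only [Sum.elim_inl, Sum.elim_inr, Finset.sum_const_zero, add_zero]
    simp only [Fintype.sum_prod_type]
    simp [← Finset.mul_sum, auxC_row]
  have hμ₂nn : ∀ ω, 0 ≤ μ₂ ω := by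
    rintro (x | u)
    · have hb := hεbd x.1 x.2.1 x.2.2.1 x.2.2.2
      have hx : μ₂ (Sum.inl x) = δ + ε * (v x.1 x.2.1 * auxC x.2.2.1 x.2.2.2) := by
        simp [hμ₂def, hμ₁def, hμddef]
      rw [hx]
      have := (abs_le.mp hb).1
      linarith
    · have hx : μ₂ (Sum.inr u) = 1/2 := by
        simp [hμ₂def, hμ₁def, hμddef]
      rw [hx]; norm_num
  have hμ₂sum : (∑ ω, μ₂ ω) = 1 := by
    simp only [hμ₂def]
    rw [Finset.sum_add_distrib, hμ₁sum, ← Finset.mul_sum, hμdsum]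
    ring
  have hdiff : ∀ (zA zB : Fin 3) (yA yB : Y),
      auxQ μ₂ zA zB yA yB = auxQ μ₁ zA zB yA yB + ε * (2 * (auxC zA zB * v yA yB)) := by
    intro zA zB yA yB
    have h1 : auxQ μ₂ zA zB yA yB = auxQ μ₁ zA zB yA yB
        + ε * ∑ ω, μd ω * (aind (auxG ω yA) zA * aind (auxG ω yB) zB) := by
      rw [hμ₂def]
      exact auxQ_add μ₁ μd ε zA zB yA yB
    rw [h1, hμddef, Ldelta v hvskew zA zB yA yB]
  have hsync₁ : IsSynchronous (auxQ μ₁) := fun y zA zB h => auxQ_sync μ₁ y h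
  have hsync₂ : IsSynchronous (auxQ μ₂) := fun y zA zB h => auxQ_sync μ₂ y h
  have hcomp : Comp (auxQ μ₂) p = Comp (auxQ μ₁) p := by
    funext zA zB xA xB
    unfold Comp
    have hterm : ∀ yA yB : Y,
        auxQ μ₂ zA zB yA yB * p yA yB xA xB
          = auxQ μ₁ zA zB yA yB * p yA yB xA xB
            + (ε * (2 * auxC zA zB)) * (v yA yB * p yA yB xA xB) := by
      intro yA yB; rw [hdiff]; ring
    simp only [hterm, Finset.sum_add_distrib, ← Finset.mul_sum]
    rw [hv xA xB, mul_zero, add_zero]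
  have heq := hepi (Fin 3) (auxQ μ₂) (auxQ μ₁)
    (auxQ_corr μ₂ hμ₂nn hμ₂sum) hsync₂ (auxQ_classical μ₂ hμ₂nn hμ₂sum)
    (auxQ_corr μ₁ hμ₁nn hμ₁sum) hsync₁ (auxQ_classical μ₁ hμ₁nn hμ₁sum)
    hcomp
  have hpt := congrFun (congrFun (congrFun (congrFun heq 0) 1) yA₀) yB₀
  rw [hdiff 0 1 yA₀ yB₀, auxC_01] at hpt
  have h0 : ε * (2 * (1 * v yA₀ yB₀)) = 0 := by linarith
  rcases mul_eq_zero.mp h0 with h | h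
  · exact absurd h (ne_of_gt hεpos)
  · linarith
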